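/- In the abstract failure-localization model (N a finite node set, P a family of node sets as paths, k-identifiability of S ⊆ N as defined), the set S''(k) := { v ∈ N : for every F ⊆ N with v ∉ F and |F| ≤ k, there exists p ∈ P with v ∈ p and p ∩ F = ∅ } is itself k-identifiable. -/
import Mathlib


variable {V : Type*} [DecidableEq V]

/-- A set `S` of non-monitors is `k`-identifiable: any two failure sets of size at most `k`
that differ within `S` are distinguished by the failure state of some path. -/
def kIdent (N : Finset V) (P : Set (Finset V)) (S : Finset V) (k : ℕ) : Prop :=
  ∀ F₁ F₂ : Finset V, F₁ ⊆ N → F₂ ⊆ N → F₁.card ≤ k → F₂.card ≤ k →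
    F₁ ∩ S ≠ F₂ ∩ S → ∃ p ∈ P, Xor' (p ∩ F₁ = ∅) (p ∩ F₂ = ∅)

theorem Sdoubleprime_identifiable (N S'' : Finset V) (P : Set (Finset V)) (k : ℕ)
    (hS : ∀ v, v ∈ S'' ↔ v ∈ N ∧
      ∀ F : Finset V, F ⊆ N → v ∉ F → F.card ≤ k → ∃ p ∈ P, v ∈ p ∧ p ∩ F = ∅) :
    kIdent N P S'' k := by
  have key : ∀ F₁ F₂ : Finset V, F₂ ⊆ N → F₂.card ≤ k →
      ∀ v, v ∈ F₁ ∩ S'' → v ∉ F₂ ∩ S'' →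
      ∃ p ∈ P, Xor' (p ∩ F₁ = ∅) (p ∩ F₂ = ∅) := by
    intro F₁ F₂ hF₂ hk₂ v hv hvF₂'
    rw [Finset.mem_inter] at hv
    obtain ⟨hv₁, hvS⟩ := hv
    have hvF₂ : v ∉ F₂ := fun h => hvF₂' (Finset.mem_inter.2 ⟨h, hvS⟩)
    obtain ⟨-, hprop⟩ := (hS v).1 hvS
    obtain ⟨p, hpP, hvp, hp⟩ := hprop F₂ hF₂ hvF₂ hk₂
    refine ⟨p, hpP, Or.inr ⟨hp, ?_⟩⟩
    intro h
    exact (Finset.eq_empty_iff_forall_notMem.1 h v) (Finset.mem_inter.2 ⟨hvp, hv₁⟩)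
  intro F₁ F₂ h₁ h₂ hk₁ hk₂ hne
  by_cases hsub : F₁ ∩ S'' ⊆ F₂ ∩ S''
  · have hsub2 : ¬ F₂ ∩ S'' ⊆ F₁ ∩ S'' := fun h =>
      hne (Finset.Subset.antisymm hsub h)
    obtain ⟨v, hv, hvn⟩ := Finset.not_subset.1 hsub2
    obtain ⟨p, hpP, hp⟩ := key F₂ F₁ h₁ hk₁ v hv hvn
    exact ⟨p, hpP, hp.symm⟩
  · obtain ⟨v, hv, hvn⟩ := Finset.not_subset.1 hsub
    exact key F₁ F₂ h₂ hk₂ v hv hvn
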